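/- Let G be a finite bipartite graph whose odd vertices are each declared open or closed, and let M be a matching of G that matches all open odd vertices. Let v be an even vertex matched in M. If there is an M-alternating path starting from v that contains a closed odd vertex, then there exists a matching M_v of G that matches all open odd vertices but does not match v. -/

import Mathlib

variable {V : Type*}

/-- alternating path lemma.  Let `G` be a finite bipartite
graph with vertex classes described by `oddV` (odd) and its complement (even),
where each odd vertex is open or closed (`closed ⊆ oddV`).  Let `M` be a
matching (a matching subgraph, possibly using closed vertices) that matches
all open odd vertices, and let `v` be an even vertex matched in `M`.  If there
is an `M`-alternating path starting from `v` (a self-avoiding path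
`f 0, f 1, …, f l` in `G` with `{f i, f (i+1)} ∈ M` for all even `i`) that
contains a closed (odd) vertex, then there is a matching that matches all open
odd vertices but does not match `v`. -/
theorem exists_matching_avoiding_of_alternating_path [Fintype V]
    (G : SimpleGraph V) (oddV closed : V → Prop)
    (hbip : ∀ u w : V, G.Adj u w → (oddV u ↔ ¬ oddV w))
    (hco : ∀ u, closed u → oddV u)
    (M : G.Subgraph) (hM : M.IsMatching)
    (hall : ∀ u, oddV u → ¬ closed u → u ∈ M.verts)
    (v : V) (hv : ¬ oddV v) (hvM : v ∈ M.verts)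
    (hpath : ∃ (l : ℕ) (f : ℕ → V),
      f 0 = v ∧
      (∀ i j, i ≤ l → j ≤ l → f i = f j → i = j) ∧
      (∀ i, i + 1 ≤ l → G.Adj (f i) (f (i + 1))) ∧
      (∀ i, i + 1 ≤ l → i % 2 = 0 → M.Adj (f i) (f (i + 1))) ∧
      (∃ i, i ≤ l ∧ closed (f i))) :
    ∃ N : G.Subgraph, N.IsMatching ∧
      (∀ u, oddV u → ¬ closed u → u ∈ N.verts) ∧ v ∉ N.verts := by
  classical
  obtain ⟨l, f, hf0, hinj, hadj, hMadj, k, hkl, hkc⟩ := hpath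
  -- parity along the path
  have hpar : ∀ i, i ≤ l → (oddV (f i) ↔ i % 2 = 1) := by
    intro i
    induction i with
    | zero => intro _; simp [hf0, hv]
    | succ n ih =>
      intro h
      have hn := ih (Nat.le_of_succ_le h)
      have h2 := hbip _ _ (hadj n h)
      have h3 : ¬ (n % 2 = 1) ↔ (n + 1) % 2 = 1 := by omega
      rw [← h3, ← hn]
      tauto
  have hkodd : k % 2 = 1 := (hpar k hkl).mp (hco _ hkc)
  have hk1 : 1 ≤ k := by omega
  -- every path vertex (index ≤ k) is matched in M
  have hmem : ∀ i, i ≤ k → f i ∈ M.verts := by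
    intro i hik
    rcases Nat.even_or_odd i with hi | hi
    · have hi2 : i % 2 = 0 := Nat.even_iff.mp hi
      have hik' : i + 1 ≤ k := by omega
      exact (hMadj i (by omega) hi2).fst_mem
    · have hi2 : i % 2 = 1 := Nat.odd_iff.mp hi
      have h1 : (i - 1) + 1 = i := by omega
      have := hMadj (i - 1) (by omega) (by omega)
      rw [h1] at this
      exact this.symm.fst_mem
  -- the M-partner function
  set pM : V → V := fun a => if h : a ∈ M.verts then (hM h).choose else a with hpMdef
  have hpM1 : ∀ a, a ∈ M.verts → M.Adj a (pM a) := by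
    intro a ha
    simp only [hpMdef, dif_pos ha]
    exact (hM ha).choose_spec.1
  have hpM2 : ∀ a, a ∈ M.verts → ∀ b, M.Adj a b → b = pM a := by
    intro a ha b hb
    simp only [hpMdef, dif_pos ha]
    exact (hM ha).choose_spec.2 b hb |>.symm ▸ rfl
  have hpMmem : ∀ a, a ∈ M.verts → pM a ∈ M.verts := fun a ha => (hpM1 a ha).symm.fst_mem
  have hpMinv : ∀ a, a ∈ M.verts → pM (pM a) = a :=
    fun a ha => ((hpM2 (pM a) (hpMmem a ha) a (hpM1 a ha).symm)).symm
  -- pM maps path vertices to path vertices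
  have hpMpath : ∀ j, j ≤ k → ∃ j', j' ≤ k ∧ pM (f j) = f j' := by
    intro j hjk
    rcases Nat.even_or_odd j with hj | hj
    · have hj2 : j % 2 = 0 := Nat.even_iff.mp hj
      have hjk' : j + 1 ≤ k := by omega
      exact ⟨j + 1, hjk', (hpM2 _ (hmem j hjk) _ (hMadj j (by omega) hj2)).symm⟩
    · have hj2 : j % 2 = 1 := Nat.odd_iff.mp hj
      have h1 : (j - 1) + 1 = j := by omega
      have hadjM := hMadj (j - 1) (by omega) (by omega)
      rw [h1] at hadjM
      exact ⟨j - 1, by omega, (hpM2 _ (hmem j hjk) _ hadjM.symm).symm⟩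
  -- the new partner function
  set m : V → V := fun a =>
    if h : ∃ i, i ≤ k ∧ f i = a then
      (if h.choose % 2 = 1 then f (h.choose + 1) else f (h.choose - 1))
    else pM a with hmdef
  have hmidx : ∀ i, i ≤ k → m (f i) = if i % 2 = 1 then f (i + 1) else f (i - 1) := by
    intro i hik
    have h : ∃ j, j ≤ k ∧ f j = f i := ⟨i, hik, rfl⟩
    simp only [hmdef, dif_pos h]
    obtain ⟨hc1, hc2⟩ := h.choose_spec
    have : h.choose = i := hinj _ _ (hc1.trans hkl) (hik.trans hkl) hc2
    rw [this]
  have hmoff : ∀ a, ¬ (∃ i, i ≤ k ∧ f i = a) → m a = pM a := by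
    intro a ha
    simp only [hmdef, dif_neg ha]
  -- the vertex set of the new matching
  set S : Set V := {a | a ∈ M.verts ∧ a ≠ v ∧ a ≠ f k} with hSdef
  -- the master lemma
  have hmain : ∀ a, a ∈ S → m a ∈ S ∧ m (m a) = a ∧ G.Adj a (m a) := by
    intro a ⟨haM, hav, hak⟩
    by_cases hp : ∃ i, i ≤ k ∧ f i = a
    · obtain ⟨i, hik, rfl⟩ := hp
      have hi0 : i ≠ 0 := fun h => hav (h ▸ hf0)
      have hikne : i ≠ k := fun h => hak (h ▸ rfl)
      rcases Nat.even_or_odd i with hi | hi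
      · -- i even, partner is f (i-1)
        have hi2 : ¬ i % 2 = 1 := by have := Nat.even_iff.mp hi; omega
        have hma : m (f i) = f (i - 1) := by rw [hmidx i hik, if_neg hi2]
        have h1 : (i - 1) + 1 = i := by omega
        have hik1 : i - 1 ≤ k := by omega
        have h1odd : (i - 1) % 2 = 1 := by have := Nat.even_iff.mp hi; omega
        have hne0 : i - 1 ≠ 0 := by have := Nat.even_iff.mp hi; omega
        have hnek : i - 1 ≠ k := by omega
        refine ⟨⟨?_, ?_, ?_⟩, ?_, ?_⟩
        · rw [hma]; exact hmem _ hik1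
        · rw [hma, ← hf0]
          intro h
          exact hne0 (hinj _ _ (hik1.trans hkl) (by omega) h)
        · rw [hma]
          intro h
          exact hnek (hinj _ _ (hik1.trans hkl) hkl h)
        · rw [hma, hmidx _ hik1, if_pos h1odd, h1]
        · rw [hma]
          have := hadj (i - 1) (by omega)
          rw [h1] at this
          exact this.symm
      · -- i odd, partner is f (i+1)
        have hi2 : i % 2 = 1 := Nat.odd_iff.mp hi
        have hma : m (f i) = f (i + 1) := by rw [hmidx i hik, if_pos hi2]
        have hik1 : i + 1 ≤ k := by omega
        have h1even : ¬ (i + 1) % 2 = 1 := by omega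
        have hne0 : i + 1 ≠ 0 := by omega
        have hnek : i + 1 ≠ k := by omega
        refine ⟨⟨?_, ?_, ?_⟩, ?_, ?_⟩
        · rw [hma]; exact hmem _ hik1
        · rw [hma, ← hf0]
          intro h
          exact hne0 (hinj _ _ (hik1.trans hkl) (by omega) h)
        · rw [hma]
          intro h
          exact hnek (hinj _ _ (hik1.trans hkl) hkl h)
        · rw [hma, hmidx _ hik1, if_neg h1even]
          simp
        · rw [hma]
          exact hadj i (by omega)
    · have hma : m a = pM a := hmoff a hp
      have hpMoff : ¬ (∃ j, j ≤ k ∧ f j = pM a) := by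
        rintro ⟨j, hjk, hj⟩
        obtain ⟨j', hj'k, hj'⟩ := hpMpath j hjk
        apply hp
        refine ⟨j', hj'k, ?_⟩
        rw [hj'.symm, hj, hpMinv a haM]
      refine ⟨⟨?_, ?_, ?_⟩, ?_, ?_⟩
      · rw [hma]; exact hpMmem a haM
      · rw [hma]
        intro h
        exact hpMoff ⟨0, by omega, by rw [hf0, h]⟩
      · rw [hma]
        intro h
        exact hpMoff ⟨k, le_refl k, h.symm⟩
      · rw [hma, hmoff _ hpMoff, hpMinv a haM]
      · rw [hma]
        exact M.adj_sub (hpM1 a haM)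
  -- build the new matching subgraph
  refine ⟨⟨S, fun a b => a ∈ S ∧ b ∈ S ∧ (b = m a ∨ a = m b), ?_, ?_, ?_⟩, ?_, ?_, ?_⟩
  · rintro a b ⟨ha, hb, h | h⟩
    · exact h ▸ (hmain a ha).2.2
    · exact (h ▸ (hmain b hb).2.2).symm
  · rintro a b ⟨ha, _, _⟩
    exact ha
  · refine ⟨fun a b ⟨ha, hb, h⟩ => ?_⟩
    exact ⟨hb, ha, h.symm⟩
  · intro a ha
    refine ⟨m a, ⟨ha, (hmain a ha).1, Or.inl rfl⟩, ?_⟩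
    rintro b ⟨_, hb, h | h⟩
    · exact h
    · rw [h, (hmain b hb).2.1]
  · intro u hu hcu
    exact ⟨hall u hu hcu, fun h => hv (h ▸ hu), fun h => hcu (h ▸ hkc)⟩
  · rintro ⟨_, h, _⟩
    exact h rfl
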